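/- Every matrix [[a,-b],[0,d]] with a,b,d positive integers, ad = m, and 0 < b ≤ d can be written uniquely as a product [[1,-p],[0,q]]·[[1,0],[0,d₁]]·[[d₂,0],[0,1]], where m = d₁d₂q, d₁,d₂ ≥ 1, 0 < p ≤ q, and gcd(p,q) = 1. Conversely, every quadruple (d₁,d₂,p,q) satisfying these conditions arises from exactly one such matrix (a,b,d) with ad = m and 0 < b ≤ d. -/

import Mathlib

private lemma stmt4_prod (p q d₁ d₂ : ℤ) :
    !![(1:ℤ), -p; 0, q] * !![1, 0; 0, d₁] * !![d₂, 0; 0, 1] =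
      !![d₂, -(p*d₁); 0, q*d₁] := by
  ext i j
  fin_cases i <;> fin_cases j <;>
    simp [Matrix.mul_apply, Fin.sum_univ_two]

theorem stmt4 (m : ℤ) (hm : 0 < m) :
    (∀ a b d : ℤ, 1 ≤ a → 0 < b → b ≤ d → a * d = m →
      ∃! x : ℤ × ℤ × ℤ × ℤ,
        1 ≤ x.1 ∧ 1 ≤ x.2.1 ∧ 0 < x.2.2.1 ∧ x.2.2.1 ≤ x.2.2.2 ∧
        IsCoprime x.2.2.1 x.2.2.2 ∧ x.1 * x.2.1 * x.2.2.2 = m ∧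
        !![a, -b; 0, d] =
          !![1, -x.2.2.1; 0, x.2.2.2] * !![1, 0; 0, x.1] * !![x.2.1, 0; 0, 1]) ∧
    (∀ d₁ d₂ p q : ℤ, 1 ≤ d₁ → 1 ≤ d₂ → 0 < p → p ≤ q → IsCoprime p q →
      d₁ * d₂ * q = m →
      ∃! y : ℤ × ℤ × ℤ,
        1 ≤ y.1 ∧ 0 < y.2.1 ∧ y.2.1 ≤ y.2.2 ∧ y.1 * y.2.2 = m ∧
        !![y.1, -y.2.1; 0, y.2.2] =
          !![1, -p; 0, q] * !![1, 0; 0, d₁] * !![d₂, 0; 0, 1]) := by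
  constructor
  · intro a b d ha hb hbd had
    have hd0 : 0 < d := lt_of_lt_of_le hb hbd
    have hgnat : 0 < Int.gcd b d := Int.gcd_pos_iff.mpr (Or.inl hb.ne')
    set G : ℤ := (Int.gcd b d : ℤ) with hG
    have hgpos : (0:ℤ) < G := by rw [hG]; exact_mod_cast hgnat
    obtain ⟨p, hbp⟩ : G ∣ b := Int.gcd_dvd_left b d
    obtain ⟨q, hdq⟩ : G ∣ d := Int.gcd_dvd_right b d
    have hp0 : 0 < p := by
      rcases mul_pos_iff.mp (hbp ▸ hb) with ⟨_, h⟩ | ⟨h, _⟩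
      · exact h
      · linarith
    have hq0 : 0 < q := by
      rcases mul_pos_iff.mp (hdq ▸ hd0) with ⟨_, h⟩ | ⟨h, _⟩
      · exact h
      · linarith
    have hpq : p ≤ q := by
      have : G * p ≤ G * q := by rw [← hbp, ← hdq]; exact hbd
      exact le_of_mul_le_mul_left this hgpos
    have hGabs : G.natAbs = Int.gcd b d := by rw [hG]; simp
    have h1 : Int.gcd b d = Int.gcd b d * Int.gcd p q := by
      conv_lhs => rw [hbp, hdq]
      rw [Int.gcd_mul_left, hGabs]
    have hcop : Int.gcd p q = 1 :=
      Nat.eq_of_mul_eq_mul_left hgnat (by rw [mul_one]; exact h1.symm)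
    have hmatrix : !![a, -b; 0, d] = !![a, -(p*G); 0, q*G] := by
      rw [hbp, hdq, mul_comm G p, mul_comm G q]
    refine ⟨(G, a, p, q), ⟨by exact hgpos, ha, hp0, hpq,
      Int.isCoprime_iff_gcd_eq_one.mpr hcop, by linear_combination had - a * hdq, ?_⟩, ?_⟩
    · rw [stmt4_prod]; exact hmatrix
    · rintro ⟨d₁', d₂', p', q'⟩ ⟨hd₁', hd₂', hp', hpq', hcop', hprod', hmat'⟩
      simp only at hd₁' hd₂' hp' hpq' hcop' hprod'
      rw [stmt4_prod] at hmat'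
      have e00 : a = d₂' := by have := congrFun (congrFun hmat' 0) 0; simpa using this
      have e01 : b = p' * d₁' := by
        have := congrFun (congrFun hmat' 0) 1; simp at this; linarith
      have e11 : d = q' * d₁' := by
        have := congrFun (congrFun hmat' 1) 1; simpa using this
      have hd₁'0 : (0:ℤ) < d₁' := by linarith
      have hgx : G = d₁' := by
        have h2 : Int.gcd b d = Int.gcd p' q' * d₁'.natAbs := by
          conv_lhs => rw [e01, e11]
          exact Int.gcd_mul_right p' d₁' q'
        rw [Int.isCoprime_iff_gcd_eq_one.mp hcop', one_mul] at h2
        rw [hG, h2, Int.natAbs_of_nonneg hd₁'0.le]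
      have hpp : p' = p := by
        have h2 : p' * d₁' = p * d₁' := by rw [← e01, hbp, hgx]; ring
        exact mul_right_cancel₀ hd₁'0.ne' h2
      have hqq : q' = q := by
        have h2 : q' * d₁' = q * d₁' := by rw [← e11, hdq, hgx]; ring
        exact mul_right_cancel₀ hd₁'0.ne' h2
      simp [Prod.ext_iff, hgx, e00.symm, hpp, hqq]
  · intro d₁ d₂ p q hd₁ hd₂ hp hpq hcop hprod
    refine ⟨(d₂, p * d₁, q * d₁), ⟨hd₂, mul_pos hp (by linarith),
      mul_le_mul_of_nonneg_right hpq (by linarith), by linear_combination hprod, ?_⟩, ?_⟩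
    · rw [stmt4_prod]
    · rintro ⟨a, b, d⟩ ⟨_, _, _, _, hmat⟩
      rw [stmt4_prod] at hmat
      have e00 : a = d₂ := by have := congrFun (congrFun hmat 0) 0; simpa using this
      have e01 : b = p * d₁ := by
        have := congrFun (congrFun hmat 0) 1; simp at this; linarith
      have e11 : d = q * d₁ := by
        have := congrFun (congrFun hmat 1) 1; simpa using this
      simp [Prod.ext_iff, e00, e01, e11]
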